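/- arXiv:1310.5773 — 7 statements merged into one kernel-verified Lean document; each statement's English description precedes it below -/
import Mathlib

section
/- If (A, B) is a periodic Golay pair of length v > 1, then v is even. -/
open Finset

/-- Zero-extension of a sequence indexed by `ZMod v` to all of `ℤ`,
with `a_i = 0` for `i` outside `[0, v-1]`. -/
def zext (v : ℕ) (A : ZMod v → ℤ) (n : ℤ) : ℤ :=
  if 0 ≤ n ∧ n < (v : ℤ) then A (n : ZMod v) else 0

/-- Nonperiodic autocorrelation function `NAF_A(s) = Σ_{i∈ℤ} a_i a_{i+s}`. -/
def naf (v : ℕ) (A : ZMod v → ℤ) (s : ℤ) : ℤ :=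
  ∑ i ∈ Finset.range v, zext v A i * zext v A (i + s)

/-- Periodic autocorrelation function `PAF_A(s) = Σ_{i∈Z_v} a_i a_{i+s}`. -/
def paf (v : ℕ) (A : ZMod v → ℤ) (s : ZMod v) : ℤ :=
  ∑ i ∈ Finset.range v, A i * A ((i : ZMod v) + s)

/-- Number of ordered pairs `(a,b)` with `a - b = c` and both `a,b` in `X`,
or both in `Y` (counted with multiplicity over the two blocks). -/
def sdsCount (v : ℕ) (X Y : Finset (ZMod v)) (c : ZMod v) : ℕ :=
  ((X ×ˢ X).filter fun p => p.1 - p.2 = c).card +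
  ((Y ×ˢ Y).filter fun p => p.1 - p.2 = c).card

private lemma prod_range_cast (v : ℕ) [NeZero v] (f : ZMod v → ℤ) :
    ∏ i ∈ Finset.range v, f (i : ZMod v) = ∏ x : ZMod v, f x := by
  refine Finset.prod_nbij' (fun i => (i : ZMod v)) (fun x => x.val) ?_ ?_ ?_ ?_ ?_
  · intro i hi; exact mem_univ _
  · intro x _; simpa using ZMod.val_lt x
  · intro i hi; simp at hi; exact ZMod.val_natCast_of_lt hi
  · intro x _; exact ZMod.natCast_rightInverse x
  · intro i hi; rfl

private lemma pm_sum (s : Finset ℕ) (t : ℕ → ℤ)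
    (ht : ∀ i ∈ s, t i = 1 ∨ t i = -1) (hp : ∏ i ∈ s, t i = 1) :
    ∃ k : ℤ, ∑ i ∈ s, t i = s.card - 4 * k := by
  classical
  set S := s.filter (fun i => t i = -1) with hS
  set T := s.filter (fun i => ¬ t i = -1) with hT
  have hsumS : ∑ i ∈ S, t i = -(S.card : ℤ) := by
    rw [Finset.sum_congr rfl (fun i hi => (mem_filter.mp hi).2)]; simp [hS]
  have hsumT : ∑ i ∈ T, t i = (T.card : ℤ) := by
    have : ∀ i ∈ T, t i = 1 := by
      intro i hi
      rcases mem_filter.mp hi with ⟨his, hne⟩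
      rcases ht i his with h | h
      · exact h
      · exact absurd h hne
    rw [Finset.sum_congr rfl this]; simp
  have hcard : S.card + T.card = s.card :=
    Finset.card_filter_add_card_filter_not _
  have hsum : ∑ i ∈ s, t i = (s.card : ℤ) - 2 * S.card := by
    rw [← Finset.sum_filter_add_sum_filter_not s (fun i => t i = -1)]
    rw [← hS, ← hT, hsumS, hsumT]
    have : (T.card : ℤ) = (s.card : ℤ) - S.card := by
      have := hcard; push_cast [← this]; ring
    rw [this]; ring
  have hprodS : ∏ i ∈ S, t i = (-1 : ℤ) ^ S.card := by
    rw [Finset.prod_congr rfl (fun i hi => (mem_filter.mp hi).2)]; simp [hS]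
  have hprodT : ∏ i ∈ T, t i = 1 := by
    apply Finset.prod_eq_one
    intro i hi
    rcases mem_filter.mp hi with ⟨his, hne⟩
    rcases ht i his with h | h
    · exact h
    · exact absurd h hne
  have hprod : ((-1 : ℤ)) ^ S.card = 1 := by
    have := Finset.prod_filter_mul_prod_filter_not s (fun i => t i = -1) t
    rw [← hS, ← hT, hprodS, hprodT, hp] at this
    simpa using this
  have heven : Even S.card := by
    by_contra h
    rw [Nat.not_even_iff_odd] at h
    rw [h.neg_one_pow] at hprod
    norm_num at hprod
  obtain ⟨k, hk⟩ := heven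
  refine ⟨k, ?_⟩
  rw [hsum, hk]; push_cast; ring

private lemma paf_shape (v : ℕ) [NeZero v] (A : ZMod v → ℤ)
    (hA : ∀ i, A i = 1 ∨ A i = -1) (s : ZMod v) :
    ∃ k : ℤ, paf v A s = v - 4 * k := by
  have ht : ∀ i ∈ Finset.range v, A (i : ZMod v) * A ((i : ZMod v) + s) = 1 ∨
      A (i : ZMod v) * A ((i : ZMod v) + s) = -1 := by
    intro i _
    rcases hA (i : ZMod v) with h1 | h1 <;> rcases hA ((i : ZMod v) + s) with h2 | h2 <;>
      simp [h1, h2]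
  have hp : ∏ i ∈ Finset.range v, A (i : ZMod v) * A ((i : ZMod v) + s) = 1 := by
    rw [Finset.prod_mul_distrib]
    rw [prod_range_cast v A, prod_range_cast v (fun x => A (x + s))]
    rw [Fintype.prod_equiv (Equiv.addRight s) (fun x => A (x + s)) A (fun x => rfl)]
    rw [← sq, ← Finset.prod_pow]
    apply Finset.prod_eq_one
    intro x _
    rcases hA x with h | h <;> simp [h]
  obtain ⟨k, hk⟩ := pm_sum (Finset.range v) _ ht hp
  refine ⟨k, ?_⟩
  simpa [paf] using hk

theorem periodic_golay_length_even (v : ℕ) (hv : 1 < v)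
    (A B : ZMod v → ℤ)
    (hA : ∀ i, A i = 1 ∨ A i = -1) (hB : ∀ i, B i = 1 ∨ B i = -1)
    (hP : ∀ s : ZMod v, s ≠ 0 → paf v A s + paf v B s = 0) :
    Even v := by
  haveI : NeZero v := ⟨by omega⟩
  haveI : Fact (1 < v) := ⟨hv⟩
  have h1 : (1 : ZMod v) ≠ 0 := one_ne_zero
  obtain ⟨k1, hk1⟩ := paf_shape v A hA 1
  obtain ⟨k2, hk2⟩ := paf_shape v B hB 1
  have := hP 1 h1
  rw [hk1, hk2] at this
  have hveven : Even (v : ℤ) := ⟨k1 + k2, by linarith⟩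
  exact Int.even_coe_nat v |>.mp hveven
end

section
/- If (A, B) is a periodic Golay pair of length v, and r = |{i : a_i = -1}|, s = |{i : b_i = -1}|, then (v - 2r)^2 + (v - 2s)^2 = 2v. In particular, v is a sum of two squares. -/
open Finset

open Finset

lemma sum_range_eq_sum_zmod (v : ℕ) [NeZero v] (f : ZMod v → ℤ) :
    ∑ i ∈ Finset.range v, f i = ∑ i : ZMod v, f i := by
  refine Finset.sum_nbij' (fun i => (i : ZMod v)) (fun j => j.val) ?_ ?_ ?_ ?_ ?_
  · intro a ha; exact Finset.mem_univ _
  · intro a ha; exact Finset.mem_range.mpr (ZMod.val_lt a)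
  · intro a ha; exact ZMod.val_natCast_of_lt (Finset.mem_range.mp ha)
  · intro a ha; exact ZMod.natCast_rightInverse a
  · intro a ha; rfl

lemma sum_paf (v : ℕ) [NeZero v] (C : ZMod v → ℤ) :
    ∑ t : ZMod v, paf v C t = (∑ i : ZMod v, C i) ^ 2 := by
  have : ∀ t, paf v C t = ∑ i : ZMod v, C i * C (i + t) := by
    intro t; exact sum_range_eq_sum_zmod v (fun i => C i * C (i + t))
  simp_rw [this]
  rw [Finset.sum_comm]
  have h2 : ∀ i : ZMod v, ∑ t : ZMod v, C i * C (i + t) = C i * ∑ j : ZMod v, C j := by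
    intro i
    rw [← Finset.mul_sum]
    congr 1
    exact Fintype.sum_equiv (Equiv.addLeft i) _ _ (fun t => rfl)
  simp_rw [h2, ← Finset.sum_mul, sq]

lemma paf_zero (v : ℕ) [NeZero v] (C : ZMod v → ℤ) (hC : ∀ i, C i = 1 ∨ C i = -1) :
    paf v C 0 = v := by
  rw [paf]
  have : ∀ i ∈ Finset.range v, C i * C ((i : ZMod v) + 0) = 1 := by
    intro i _
    rcases hC (i : ZMod v) with h | h <;> simp [h]
  rw [Finset.sum_congr rfl this]
  simp

lemma sum_pm (v : ℕ) [NeZero v] (C : ZMod v → ℤ) (hC : ∀ i, C i = 1 ∨ C i = -1) :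
    ∑ i : ZMod v, C i = (v : ℤ) - 2 * (Finset.univ.filter fun i : ZMod v => C i = -1).card := by
  have h1 : ∀ i : ZMod v, C i = if C i = -1 then (-1 : ℤ) else 1 := by
    intro i; rcases hC i with h | h <;> simp [h]
  rw [Finset.sum_congr rfl (fun i _ => h1 i), Finset.sum_ite]
  have hc := Finset.card_filter_add_card_filter_not
    (s := (Finset.univ : Finset (ZMod v))) (p := fun i => C i = -1)
  simp only [Finset.sum_const, Finset.card_univ, ZMod.card, smul_eq_mul, mul_one,
    mul_neg_one, nsmul_eq_mul] at hc ⊢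
  omega

theorem periodic_golay_sum_two_squares (v : ℕ) [NeZero v]
    (A B : ZMod v → ℤ)
    (hA : ∀ i, A i = 1 ∨ A i = -1) (hB : ∀ i, B i = 1 ∨ B i = -1)
    (hP : ∀ s : ZMod v, s ≠ 0 → paf v A s + paf v B s = 0)
    (r s : ℕ)
    (hr : r = (Finset.univ.filter fun i : ZMod v => A i = -1).card)
    (hs : s = (Finset.univ.filter fun i : ZMod v => B i = -1).card) :
    ((v : ℤ) - 2 * r) ^ 2 + ((v : ℤ) - 2 * s) ^ 2 = 2 * v := by
  have key : ∑ t : ZMod v, (paf v A t + paf v B t) = 2 * v := by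
    rw [Finset.sum_eq_single_of_mem 0 (Finset.mem_univ _)
      (fun t _ ht => hP t ht)]
    rw [paf_zero v A hA, paf_zero v B hB]; ring
  rw [Finset.sum_add_distrib, sum_paf, sum_paf, sum_pm v A hA, sum_pm v B hB,
    ← hr, ← hs] at key
  exact key
end

section
/- Conversely, if (X, Y) is a supplementary difference set in Z_v with parameters (v; r, s; λ) satisfying v = 2(r + s - λ), then the binary sequences A, B defined by a_i = -1 iff i ∈ X and b_i = -1 iff i ∈ Y form a periodic Golay pair of length v. -/
open Finset

theorem sum_range_zmod (v : ℕ) [NeZero v] (f : ZMod v → ℤ) :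
    ∑ i ∈ Finset.range v, f (i : ZMod v) = ∑ i : ZMod v, f i := by
  refine Finset.sum_bij' (fun i _ => (i : ZMod v)) (fun i _ => i.val) ?_ ?_ ?_ ?_ ?_
  · intro a _; exact mem_univ _
  · intro a _; simpa [Finset.mem_range] using ZMod.val_lt a
  · intro a ha; simp [Finset.mem_range] at ha; simp [ZMod.val_natCast_of_lt ha]
  · intro a _; simp [ZMod.natCast_val, ZMod.cast_id]
  · intro a _; rfl

theorem pairs_card (v : ℕ) (X : Finset (ZMod v)) (s : ZMod v) :
    ((X ×ˢ X).filter fun p => p.1 - p.2 = s).card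
      = (X.filter fun b => b + s ∈ X).card := by
  refine Finset.card_bij' (fun p _ => p.2) (fun b _ => (b + s, b)) ?_ ?_ ?_ ?_
  · intro p hp
    simp only [mem_filter, mem_product] at hp ⊢
    obtain ⟨⟨h1, h2⟩, h3⟩ := hp
    refine ⟨h2, ?_⟩
    have : p.2 + s = p.1 := by rw [← h3]; ring
    rw [this]; exact h1
  · intro b hb
    simp only [mem_filter, mem_product] at hb ⊢
    exact ⟨⟨hb.2, hb.1⟩, by ring⟩
  · intro p hp
    simp only [mem_filter, mem_product] at hp
    have : p.2 + s = p.1 := by rw [← hp.2]; ring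
    ext <;> simp [this]
  · intro b _; rfl

theorem paf_eval (v : ℕ) [NeZero v] (X : Finset (ZMod v)) (A : ZMod v → ℤ)
    (hA : ∀ i : ZMod v, A i = if i ∈ X then -1 else 1) (s : ZMod v) :
    paf v A s = (Fintype.card (ZMod v) : ℤ) - 4 * X.card
      + 4 * (X.filter fun b => b + s ∈ X).card := by
  have key : paf v A s = ∑ i : ZMod v, A i * A (i + s) :=
    sum_range_zmod v (fun i => A i * A (i + s))
  rw [key]
  have expand : ∀ i : ZMod v, A i * A (i + s)
      = 1 - 2 * (if i ∈ X then (1:ℤ) else 0) - 2 * (if i + s ∈ X then (1:ℤ) else 0)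
        + 4 * ((if i ∈ X then (1:ℤ) else 0) * (if i + s ∈ X then (1:ℤ) else 0)) := by
    intro i
    rw [hA, hA]
    by_cases h1 : i ∈ X <;> by_cases h2 : i + s ∈ X <;> simp [h1, h2]
  simp only [expand]
  rw [Finset.sum_add_distrib, Finset.sum_sub_distrib, Finset.sum_sub_distrib,
    ← Finset.mul_sum, ← Finset.mul_sum, ← Finset.mul_sum]
  have e1 : ∑ i : ZMod v, (if i ∈ X then (1:ℤ) else 0) = X.card := by
    simp [Finset.sum_ite_mem]
  have e2 : ∑ i : ZMod v, (if i + s ∈ X then (1:ℤ) else 0) = X.card := by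
    rw [← e1]
    exact Fintype.sum_equiv (Equiv.addRight s) _ _ (fun i => by simp; congr)
  have e3 : ∑ i : ZMod v, ((if i ∈ X then (1:ℤ) else 0) * (if i + s ∈ X then (1:ℤ) else 0))
      = (X.filter fun b => b + s ∈ X).card := by
    rw [Finset.card_filter]
    push_cast
    rw [← Finset.sum_subset (Finset.subset_univ X) (fun i _ hi => by simp [hi])]
    apply Finset.sum_congr rfl
    intro i hiX
    simp [hiX]
  rw [e1, e2, e3]
  simp [Finset.card_univ]
  ring

theorem sds_gives_periodic_golay_pair (v : ℕ) (hv : 0 < v)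
    (X Y : Finset (ZMod v)) (lam : ℕ)
    (hparam : (v : ℤ) = 2 * ((X.card : ℤ) + (Y.card : ℤ) - (lam : ℤ)))
    (hSDS : ∀ c : ZMod v, c ≠ 0 → sdsCount v X Y c = lam)
    (A B : ZMod v → ℤ)
    (hA : ∀ i : ZMod v, A i = if i ∈ X then -1 else 1)
    (hB : ∀ i : ZMod v, B i = if i ∈ Y then -1 else 1) :
    ∀ s : ZMod v, s ≠ 0 → paf v A s + paf v B s = 0 := by
  have : NeZero v := ⟨hv.ne'⟩
  intro s hs
  rw [paf_eval v X A hA s, paf_eval v Y B hB s]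
  have hcard : (Fintype.card (ZMod v) : ℤ) = v := by rw [ZMod.card]
  have hsum : ((X.filter fun b => b + s ∈ X).card : ℤ)
      + ((Y.filter fun b => b + s ∈ Y).card : ℤ) = lam := by
    have := hSDS s hs
    rw [sdsCount, pairs_card, pairs_card] at this
    exact_mod_cast this
  rw [hcard]
  linarith [hsum, hparam]
end

section
/- If a periodic Golay pair of length v exists, then a Hadamard matrix of order 2v exists. -/
open Finset

open Matrix in
lemma paf_univ (v : ℕ) [NeZero v] (A : ZMod v → ℤ) (s : ZMod v) :
    paf v A s = ∑ t : ZMod v, A t * A (t + s) := by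
  rw [paf]
  refine Finset.sum_nbij' (fun i => (i : ZMod v)) (fun t => t.val) ?_ ?_ ?_ ?_ ?_
  · intro a _; exact Finset.mem_univ _
  · intro t _; exact Finset.mem_range.2 (ZMod.val_lt t)
  · intro a ha; exact ZMod.val_natCast_of_lt (Finset.mem_range.1 ha)
  · intro t _; simp [ZMod.natCast_val, ZMod.cast_id]
  · intro a _; rfl

open Matrix in
lemma corr_eq_paf (v : ℕ) [NeZero v] (A : ZMod v → ℤ) (i j : ZMod v) :
    ∑ k : ZMod v, A (i - k) * A (j - k) = paf v A (i - j) := by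
  rw [paf_univ]
  refine Fintype.sum_equiv (Equiv.subLeft j) _ _ ?_
  intro k
  simp only [Equiv.subLeft_apply]
  have h1 : (j - k) + (i - j) = i - k := by ring
  rw [h1]; ring

open Matrix in
lemma key (v : ℕ) [NeZero v] (A B : ZMod v → ℤ)
    (hA : ∀ i, A i = 1 ∨ A i = -1) (hB : ∀ i, B i = 1 ∨ B i = -1)
    (hpaf : ∀ s : ZMod v, s ≠ 0 → paf v A s + paf v B s = 0) :
    circulant A * (circulant A)ᵀ + circulant B * (circulant B)ᵀ
      = ((2 * v : ℤ)) • (1 : Matrix (ZMod v) (ZMod v) ℤ) := by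
  ext i j
  have hentry : ∀ C : ZMod v → ℤ,
      (circulant C * (circulant C)ᵀ) i j = ∑ k : ZMod v, C (i - k) * C (j - k) := by
    intro C
    simp [Matrix.mul_apply, circulant_apply, Matrix.transpose_apply]
  rw [Matrix.add_apply, hentry A, hentry B, corr_eq_paf, corr_eq_paf]
  by_cases hij : i = j
  · subst hij
    simp only [sub_self, Matrix.smul_apply, Matrix.one_apply_eq, smul_eq_mul, mul_one]
    have hsq : ∀ (C : ZMod v → ℤ), (∀ i, C i = 1 ∨ C i = -1) →
        paf v C 0 = (v : ℤ) := by
      intro C hC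
      rw [paf_univ]
      have : ∀ t : ZMod v, C (t + 0) = C t := by intro t; rw [add_zero]
      calc ∑ t : ZMod v, C t * C (t + 0) = ∑ t : ZMod v, 1 := by
            refine Finset.sum_congr rfl fun t _ => ?_
            rw [add_zero]; rcases hC t with h | h <;> rw [h] <;> ring
        _ = (v : ℤ) := by simp [ZMod.card]
    rw [hsq A hA, hsq B hB]; ring
  · rw [hpaf _ (sub_ne_zero.2 hij)]
    simp [Matrix.one_apply_ne hij, hij]

open Matrix in
theorem periodic_golay_gives_hadamard (v : ℕ) (hv : 0 < v)
    (h : ∃ A B : ZMod v → ℤ,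
      (∀ i, A i = 1 ∨ A i = -1) ∧ (∀ i, B i = 1 ∨ B i = -1) ∧
      ∀ s : ZMod v, s ≠ 0 → paf v A s + paf v B s = 0) :
    ∃ H : Matrix (Fin (2 * v)) (Fin (2 * v)) ℤ,
      (∀ i j, H i j = 1 ∨ H i j = -1) ∧
      H * H.transpose = ((2 * v : ℤ)) • (1 : Matrix (Fin (2 * v)) (Fin (2 * v)) ℤ) := by
  haveI : NeZero v := ⟨hv.ne'⟩
  obtain ⟨A, B, hA, hB, hpaf⟩ := h
  set M : Matrix (ZMod v) (ZMod v) ℤ := circulant A with hM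
  set N : Matrix (ZMod v) (ZMod v) ℤ := circulant B with hN
  set F : Matrix (ZMod v ⊕ ZMod v) (ZMod v ⊕ ZMod v) ℤ :=
    Matrix.fromBlocks M N Nᵀ (-Mᵀ) with hF
  have ecard : Fintype.card (ZMod v ⊕ ZMod v) = Fintype.card (Fin (2 * v)) := by
    simp [ZMod.card]; ring
  let e : (ZMod v ⊕ ZMod v) ≃ Fin (2 * v) := Fintype.equivOfCardEq ecard
  refine ⟨F.submatrix e.symm e.symm, ?_, ?_⟩
  · intro i j
    cases hp : e.symm i with
    | inl a =>
      cases hq : e.symm j with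
      | inl b => simpa [Matrix.submatrix_apply, hF, hM, hN, hp, hq, circulant_apply] using hA (a - b)
      | inr b => simpa [Matrix.submatrix_apply, hF, hM, hN, hp, hq, circulant_apply] using hB (a - b)
    | inr a =>
      cases hq : e.symm j with
      | inl b => simpa [Matrix.submatrix_apply, hF, hM, hN, hp, hq, circulant_apply] using hB (b - a)
      | inr b =>
        have := hA (-(a - b))
        simp only [Matrix.submatrix_apply, hF, hM, hN, hp, hq, Matrix.fromBlocks_apply₂₂,
          Matrix.neg_apply, transpose_circulant, circulant_apply]
        rcases this with h | h <;> rw [h] <;> [right; left] <;> ring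
  · have hFF : F * Fᵀ = ((2 * v : ℤ)) • (1 : Matrix (ZMod v ⊕ ZMod v) (ZMod v ⊕ ZMod v) ℤ) := by
      have hFt : Fᵀ = Matrix.fromBlocks Mᵀ N Nᵀ (-M) := by
        rw [hF, Matrix.fromBlocks_transpose]; simp
      rw [hFt, hF, Matrix.fromBlocks_multiply]
      have hcomm : M * N = N * M := circulant_mul_comm A B
      have hTL : M * Mᵀ + N * Nᵀ = ((2 * v : ℤ)) • (1 : Matrix (ZMod v) (ZMod v) ℤ) :=
        key v A B hA hB hpaf
      have hTR : M * N + N * (-M) = 0 := by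
        rw [mul_neg, hcomm]; exact add_neg_cancel _
      have hBL : Nᵀ * Mᵀ + (-Mᵀ) * Nᵀ = 0 := by
        have : Nᵀ * Mᵀ = Mᵀ * Nᵀ := by
          rw [hM, hN, transpose_circulant, transpose_circulant]
          exact circulant_mul_comm _ _
        rw [this, neg_mul]; exact add_neg_cancel _
      have hBR : Nᵀ * N + (-Mᵀ) * (-M) = ((2 * v : ℤ)) • (1 : Matrix (ZMod v) (ZMod v) ℤ) := by
        have h1 : Nᵀ * N = N * Nᵀ := by
          rw [hN, transpose_circulant]
          exact circulant_mul_comm _ _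
        have h2 : Mᵀ * M = M * Mᵀ := by
          rw [hM, transpose_circulant]
          exact circulant_mul_comm _ _
        rw [neg_mul_neg, h1, h2, add_comm]
        exact hTL
      rw [hTR, hBL, hBR, hTL]
      rw [← Matrix.fromBlocks_one, Matrix.fromBlocks_smul, smul_zero]
    rw [Matrix.transpose_submatrix, Matrix.submatrix_mul_equiv, hFF]
    ext i j
    rw [Matrix.submatrix_apply, Matrix.smul_apply, Matrix.smul_apply]
    congr 1
    simp [Matrix.one_apply, e.symm.injective.eq_iff]
end

section
/- There exists a periodic Golay pair of length 74, hence 74 is a periodic Golay number. -/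
open Finset

def pgpA : ZMod 74 → ℤ := fun i =>
  if i.val ∈ [1, 4, 6, 7, 8, 9, 12, 16, 22, 23, 28, 29, 30, 31, 33, 34, 40, 42, 43, 44, 45, 46, 47, 49, 50, 51, 53, 54, 56, 58, 60, 62, 63, 70, 71, 72] then -1 else 1

def pgpB : ZMod 74 → ℤ := fun i =>
  if i.val ∈ [1, 2, 4, 6, 8, 9, 12, 16, 17, 20, 21, 22, 25, 30, 35, 37, 40, 46, 47, 49, 52, 53, 54, 55, 59, 60, 61, 63, 65, 69, 72] then -1 else 1

set_option maxRecDepth 100000 in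
set_option maxHeartbeats 4000000 in
theorem periodic_golay_pair_length_74 :
    ∃ A B : ZMod 74 → ℤ,
      (∀ i, A i = 1 ∨ A i = -1) ∧ (∀ i, B i = 1 ∨ B i = -1) ∧
      ∀ s : ZMod 74, s ≠ 0 → paf 74 A s + paf 74 B s = 0 := by
  refine ⟨pgpA, pgpB, ?_, ?_, ?_⟩
  · intro i; unfold pgpA; split <;> simp
  · intro i; unfold pgpB; split <;> simp
  · decide
end

section
/- There exists a periodic Golay pair of length 122. -/
open Finset

def aL : List ℤ := [1, -1, 1, -1, 1, 1, -1, 1, -1, -1, -1, 1, 1, -1, 1, -1, -1, 1, 1, 1, 1, -1, -1, -1, 1, -1, 1, -1, -1, 1, 1, 1, 1, -1, 1, 1, 1, 1, -1, 1, 1, -1, 1, -1, 1, 1, 1, -1, 1, 1, 1, 1, -1, -1, -1, 1, -1, -1, 1, -1, -1, -1, 1, 1, -1, 1, 1, -1, 1, 1, 1, 1, -1, -1, -1, 1, -1, -1, -1, 1, 1, -1, -1, -1, 1, -1, 1, 1, -1, 1, -1, 1, -1, 1, 1, -1, -1, 1, -1, 1, 1, 1, -1, -1, -1, 1, 1, 1,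 1, 1, 1, -1, 1, -1, 1, -1, 1, -1, 1, -1, -1, -1]

def bL : List ℤ := [1, 1, 1, -1, -1, 1, -1, -1, 1, 1, 1, 1, 1, -1, -1, -1, 1, 1, 1, -1, 1, 1, 1, 1, -1, -1, 1, -1, 1, 1, 1, 1, 1, 1, 1, 1, -1, 1, 1, 1, 1, -1, 1, 1, 1, 1, -1, -1, -1, -1, -1, -1, -1, 1, -1, -1, 1, -1, 1, 1, -1, 1, 1, -1, -1, -1, -1, 1, 1, 1, 1, 1, 1, -1, 1, -1, 1, -1, 1, -1, -1, 1, -1, -1, -1, 1, 1, -1, -1, 1, 1, -1, 1, -1, -1, 1, 1, -1, 1, 1, -1, -1, -1, -1, -1, -1, -1, 1, 1, 1, -1, 1, 1, -1, -1, 1, 1, -1, 1, 1, -1, -1]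

def Af : ZMod 122 → ℤ := fun i => aL.getD i.val 1
def Bf : ZMod 122 → ℤ := fun i => bL.getD i.val 1

set_option maxRecDepth 100000 in
theorem periodic_golay_pair_length_122 :
    ∃ A B : ZMod 122 → ℤ,
      (∀ i, A i = 1 ∨ A i = -1) ∧ (∀ i, B i = 1 ∨ B i = -1) ∧
      ∀ s : ZMod 122, s ≠ 0 → paf 122 A s + paf 122 B s = 0 := by
  refine ⟨Af, Bf, ?_, ?_, ?_⟩
  · decide
  · decide
  · decide
end

section
/- There exists a periodic Golay pair of length 202. -/
open Finset

def maskA : Nat := 2879955260062222576542384600224194084560525644160425258170900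
def maskB : Nat := 4858530973286217717167664640285004517814884062078843772722138

def aF (i : ZMod 202) : ℤ := if (maskA >>> i.val) % 2 = 1 then -1 else 1
def bF (i : ZMod 202) : ℤ := if (maskB >>> i.val) % 2 = 1 then -1 else 1

set_option maxRecDepth 40000 in
set_option maxHeartbeats 4000000 in
theorem periodic_golay_pair_length_202 :
    ∃ A B : ZMod 202 → ℤ,
      (∀ i, A i = 1 ∨ A i = -1) ∧ (∀ i, B i = 1 ∨ B i = -1) ∧
      ∀ s : ZMod 202, s ≠ 0 → paf 202 A s + paf 202 B s = 0 := by
  refine ⟨aF, bF, ?_, ?_, ?_⟩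
  · intro i; unfold aF; split <;> simp
  · intro i; unfold bF; split <;> simp
  · decide
end
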